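/- For any idempotent singular transformation e of {1,...,n}, the subsemigroup generated by the S_n-conjugacy class C_e = {g⁻¹eg : g ∈ S_n} equals e^{S_n}, the set of non-invertible elements of the subsemigroup generated by {e} ∪ S_n. -/

import Mathlib

/-- The full transformation monoid on `{1,...,n}`, modeled as `Function.End (Fin n)`
(multiplication is composition). -/
abbrev Tn (n : ℕ) := Function.End (Fin n)

/-- A permutation viewed as a transformation. -/
def ofPerm {n : ℕ} (g : Equiv.Perm (Fin n)) : Tn n := ⇑g

/-- The rank of a transformation: the size of its image. -/
def rnk {n : ℕ} (a : Tn n) : ℕ := (Finset.univ.image a).card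

/-- The symmetric group embedded in `Tn n` as a set. -/
def perms (n : ℕ) : Set (Tn n) := Set.range (fun g : Equiv.Perm (Fin n) => ofPerm g)

/-- The `S_n`-conjugacy class of a transformation. -/
def conjClass {n : ℕ} (t : Tn n) : Set (Tn n) :=
  {s | ∃ g : Equiv.Perm (Fin n), s = ofPerm g⁻¹ * t * ofPerm g}

namespace Aux

lemma ofPerm_mul {n : ℕ} (g h : Equiv.Perm (Fin n)) : ofPerm (g * h) = ofPerm g * ofPerm h := rfl
lemma ofPerm_one {n : ℕ} : ofPerm (1 : Equiv.Perm (Fin n)) = 1 := rfl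
lemma end_mul_apply {n : ℕ} (f g : Tn n) (x : Fin n) : (f * g) x = f (g x) := rfl

variable {n : ℕ} {e : Tn n}

/-- image finset of e -/
local notation "Y" => Finset.image e Finset.univ

lemma mem_Y (x : Fin n) : e x ∈ Y := Finset.mem_image_of_mem _ (Finset.mem_univ x)

lemma fixY (he : e * e = e) {y : Fin n} (hy : y ∈ Y) : e y = y := by
  obtain ⟨x, -, rfl⟩ := Finset.mem_image.mp hy
  exact congrFun he x

lemma exists_w (hs : ¬ Function.Bijective e) : ∃ w, e w ≠ w := by
  by_contra hc
  push_neg at hc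
  exact hs (by have : e = id := funext hc; rw [this]; exact Function.bijective_id)

lemma extend_perm (s : Finset (Fin n)) (f : Fin n → Fin n) (hinj : Set.InjOn f ↑s) :
    ∃ σ : Equiv.Perm (Fin n), ∀ x ∈ s, σ x = f x := by
  classical
  set t : Finset (Fin n) := s.image f with ht
  have hcard : t.card = s.card := Finset.card_image_of_injOn hinj
  have hccard : sᶜ.card = tᶜ.card := by
    rw [Finset.card_compl, Finset.card_compl, hcard]
  let β := Finset.equivOfCardEq hccard
  let F : Fin n → Fin n := fun x => if h : x ∈ s then f x else (β ⟨x, Finset.mem_compl.mpr h⟩ : Fin n)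
  have hFs : ∀ x ∈ s, F x = f x := fun x hx => dif_pos hx
  have hmemt : ∀ x ∈ s, F x ∈ t := by
    intro x hx; rw [hFs x hx]; exact Finset.mem_image_of_mem _ hx
  have hmemc : ∀ (x) (hx : x ∉ s), F x ∉ t := by
    intro x hx
    have : F x = (β ⟨x, Finset.mem_compl.mpr hx⟩ : Fin n) := dif_neg hx
    rw [this]
    exact Finset.mem_compl.mp (β ⟨x, Finset.mem_compl.mpr hx⟩).2
  have hFinj : Function.Injective F := by
    intro a b hab
    by_cases ha : a ∈ s <;> by_cases hb : b ∈ s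
    · exact hinj ha hb (by rwa [hFs a ha, hFs b hb] at hab)
    · exact absurd (hab ▸ hmemt a ha) (hmemc b hb)
    · exact absurd (hab ▸ hmemt b hb) (hmemc a ha)
    · have h1 : F a = (β ⟨a, Finset.mem_compl.mpr ha⟩ : Fin n) := dif_neg ha
      have h2 : F b = (β ⟨b, Finset.mem_compl.mpr hb⟩ : Fin n) := dif_neg hb
      have hba : (β ⟨a, Finset.mem_compl.mpr ha⟩ : Fin n) = (β ⟨b, Finset.mem_compl.mpr hb⟩ : Fin n) := by
        rw [← h1, ← h2]; exact hab
      have := β.injective (Subtype.ext hba)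
      exact congrArg Subtype.val this
  refine ⟨Equiv.ofBijective F (Finite.injective_iff_bijective.mp hFinj), hFs⟩

/-- key constructor: a conjugate of e fixing a given r-set T pointwise and sending p to q₀. -/
lemma sub (he : e * e = e) (hs : ¬ Function.Bijective e)
    (T : Finset (Fin n)) (hT : T.card = (Y).card) {p q₀ : Fin n}
    (hq₀ : q₀ ∈ T) (hp : p ∉ T) :
    ∃ c ∈ conjClass e, (∀ x ∈ T, c x = x) ∧ c p = q₀ := by
  classical
  obtain ⟨w, hw⟩ := exists_w hs
  set ys : Fin n := e w with hys
  have hysY : ys ∈ Y := mem_Y w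
  have hwY : w ∉ Y := fun h => hw (fixY he h)
  have hwys : w ≠ ys := fun h => hw h.symm
  have hcard' : (T.erase q₀).card = ((Y).erase ys).card := by
    rw [Finset.card_erase_of_mem hq₀, Finset.card_erase_of_mem hysY, hT]
  let β := Finset.equivOfCardEq hcard'
  let f : Fin n → Fin n := fun x =>
    if x = p then w else if x = q₀ then ys else
      if h : x ∈ T.erase q₀ then (β ⟨x, h⟩ : Fin n) else x
  have hqp : q₀ ≠ p := fun h => hp (h ▸ hq₀)
  have hfp : f p = w := if_pos rfl
  have hfq : f q₀ = ys := by
    show (if q₀ = p then w else if q₀ = q₀ then ys else _) = ys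
    rw [if_neg hqp, if_pos rfl]
  have hferase : ∀ (x) (hx : x ∈ T.erase q₀), f x = (β ⟨x, hx⟩ : Fin n) := by
    intro x hx
    have hxT := Finset.mem_of_mem_erase hx
    have hxp : x ≠ p := fun h => hp (h ▸ hxT)
    have hxq : x ≠ q₀ := Finset.ne_of_mem_erase hx
    simp only [f, if_neg hxp, if_neg hxq, dif_pos hx]
  have hferaseY : ∀ (x) (hx : x ∈ T.erase q₀), f x ∈ (Y).erase ys := by
    intro x hx; rw [hferase x hx]; exact (β ⟨x, hx⟩).2
  -- injectivity on insert p T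
  have hinj : Set.InjOn f ↑(insert p T) := by
    intro a ha b hb hab
    simp only [Finset.coe_insert, Set.mem_insert_iff, Finset.mem_coe] at ha hb
    have cases3 : ∀ x, x ∈ insert p T → x = p ∨ x = q₀ ∨ x ∈ T.erase q₀ := by
      intro x hx
      rcases Finset.mem_insert.mp hx with h | h
      · exact Or.inl h
      · by_cases hxq : x = q₀
        · exact Or.inr (Or.inl hxq)
        · exact Or.inr (Or.inr (Finset.mem_erase.mpr ⟨hxq, h⟩))
    have ha' := cases3 a (by simp [ha]); have hb' := cases3 b (by simp [hb])
    rcases ha' with rfl | rfl | haE <;> rcases hb' with rfl | rfl | hbE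
    · rfl
    · rw [hfp, hfq] at hab; exact absurd hab hwys
    · rw [hfp, hferase b hbE] at hab
      have hm := (β ⟨b, hbE⟩).2
      rw [← hab] at hm
      exact absurd (Finset.mem_of_mem_erase hm) hwY
    · rw [hfq, hfp] at hab; exact absurd hab.symm hwys
    · rfl
    · rw [hfq, hferase b hbE] at hab
      have hm := (β ⟨b, hbE⟩).2
      rw [← hab] at hm
      exact absurd rfl (Finset.mem_erase.mp hm).1
    · rw [hfp, hferase a haE] at hab
      have hm := (β ⟨a, haE⟩).2
      rw [hab] at hm
      exact absurd (Finset.mem_of_mem_erase hm) hwY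
    · rw [hfq, hferase a haE] at hab
      have hm := (β ⟨a, haE⟩).2
      rw [hab] at hm
      exact absurd rfl (Finset.mem_erase.mp hm).1
    · rw [hferase a haE, hferase b hbE] at hab
      exact congrArg Subtype.val (β.injective (Subtype.ext hab))
  obtain ⟨σ, hσ⟩ := extend_perm (insert p T) f hinj
  have hσT : ∀ x ∈ T, σ x ∈ Y := by
    intro x hx
    rw [hσ x (Finset.mem_insert_of_mem hx)]
    by_cases hxq : x = q₀
    · rw [hxq, hfq]; exact hysY
    · exact Finset.mem_of_mem_erase (hferaseY x (Finset.mem_erase.mpr ⟨hxq, hx⟩))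
  refine ⟨ofPerm σ⁻¹ * e * ofPerm σ, ⟨σ, rfl⟩, ?_, ?_⟩
  · intro x hx
    show σ⁻¹ (e (σ x)) = x
    rw [fixY he (hσT x hx)]
    exact σ.symm_apply_apply x
  · show σ⁻¹ (e (σ p)) = q₀
    rw [hσ p (Finset.mem_insert_self _ _), hfp, ← hys,
      ← hfq, ← hσ q₀ (Finset.mem_insert_of_mem hq₀)]
    exact σ.symm_apply_apply q₀

lemma injOn_update (he : e * e = e) {ψ : Fin n → Fin n} (hinj : Set.InjOn ψ ↑(Y)) {a v : Fin n}
    (hv : ∀ y ∈ Y, y ≠ a → ψ y ≠ v) : Set.InjOn (Function.update ψ a v) ↑(Y) := by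
  intro x hx y hy hxy
  by_cases hxa : x = a <;> by_cases hya : y = a
  · rw [hxa, hya]
  · rw [hxa, Function.update_self, Function.update_of_ne hya] at hxy
    exact absurd hxy.symm (hv y (Finset.mem_coe.mp hy) hya)
  · rw [hya, Function.update_self, Function.update_of_ne hxa] at hxy
    exact absurd hxy (hv x (Finset.mem_coe.mp hx) hxa)
  · rw [Function.update_of_ne hxa, Function.update_of_ne hya] at hxy
    exact hinj hx hy hxy

lemma filter_update_eq_erase {ψ : Fin n → Fin n} {y₀ : Fin n} :
    ((Y).filter fun y => Function.update ψ y₀ y₀ y ≠ y) =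
      ((Y).filter fun y => ψ y ≠ y).erase y₀ := by
  ext t
  rw [Finset.mem_erase, Finset.mem_filter, Finset.mem_filter]
  by_cases hty : t = y₀
  · subst hty
    simp [Function.update_self]
  · rw [Function.update_of_ne hty]
    exact ⟨fun h => ⟨hty, h⟩, fun h => h.2⟩

/-- Case-A step: a single conjugate retargeting ψ y₀ to y₀ when y₀ is not in the image. -/
lemma stepA (he : e * e = e) (hs : ¬ Function.Bijective e) {ψ : Fin n → Fin n}
    (hinj : Set.InjOn ψ ↑(Y)) {y₀ : Fin n} (hy₀Y : y₀ ∈ Y)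
    (hbad : ψ y₀ ≠ y₀) (hnotim : ∀ y ∈ Y, y ≠ y₀ → ψ y ≠ y₀) :
    ∃ c ∈ conjClass e, (∀ y ∈ Y, y ≠ y₀ → c (ψ y) = ψ y) ∧ c (ψ y₀) = y₀ := by
  classical
  set T : Finset (Fin n) := insert y₀ (((Y).erase y₀).image ψ) with hTdef
  have hy₀nim : y₀ ∉ ((Y).erase y₀).image ψ := by
    intro h
    obtain ⟨x, hx, hψx⟩ := Finset.mem_image.mp h
    exact hnotim x (Finset.mem_of_mem_erase hx) (Finset.ne_of_mem_erase hx) hψx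
  have hTcard : T.card = (Y).card := by
    rw [hTdef, Finset.card_insert_of_notMem hy₀nim,
      Finset.card_image_of_injOn (hinj.mono (Finset.coe_subset.mpr (Finset.erase_subset _ _))),
      Finset.card_erase_of_mem hy₀Y]
    have : 0 < (Y).card := Finset.card_pos.mpr ⟨y₀, hy₀Y⟩
    omega
  have hq₀T : y₀ ∈ T := Finset.mem_insert_self _ _
  have hpT : ψ y₀ ∉ T := by
    intro h
    rcases Finset.mem_insert.mp h with h | h
    · exact hbad h
    · obtain ⟨x, hx, hψx⟩ := Finset.mem_image.mp h
      exact Finset.ne_of_mem_erase hx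
        (hinj (Finset.mem_coe.mpr (Finset.mem_of_mem_erase hx)) (Finset.mem_coe.mpr hy₀Y) hψx)
  obtain ⟨c, hcC, hcfix, hcp⟩ := sub he hs T hTcard hq₀T hpT
  refine ⟨c, hcC, ?_, hcp⟩
  intro y hy hne
  exact hcfix _ (Finset.mem_insert_of_mem
    (Finset.mem_image_of_mem ψ (Finset.mem_erase.mpr ⟨hne, hy⟩)))

lemma Mlem (he : e * e = e) (hs : ¬ Function.Bijective e) :
    ∀ (k : ℕ) (ψ : Fin n → Fin n), Set.InjOn ψ ↑(Y) →
      ((Y).filter (fun y => ψ y ≠ y)).card ≤ k →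
      ∃ F ∈ Subsemigroup.closure (conjClass e), ∀ y ∈ Y, F (ψ y) = y := by
  classical
  intro k
  induction k with
  | zero =>
    intro ψ hinj hcard
    have hfix : ∀ y ∈ Y, ψ y = y := by
      intro y hy
      by_contra hne
      have hmem : y ∈ (Y).filter (fun y => ψ y ≠ y) := Finset.mem_filter.mpr ⟨hy, hne⟩
      have := Finset.card_pos.mpr ⟨y, hmem⟩
      omega
    refine ⟨e, Subsemigroup.subset_closure ⟨1, ?_⟩, ?_⟩
    · rw [inv_one, ofPerm_one, one_mul, mul_one]
    · intro y hy; rw [hfix y hy]; exact fixY he hy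
  | succ k IH =>
    intro ψ hinj hcard
    by_cases hle : ((Y).filter (fun y => ψ y ≠ y)).card ≤ k
    · exact IH ψ hinj hle
    have hpos : 0 < ((Y).filter (fun y => ψ y ≠ y)).card := by omega
    obtain ⟨y₀, hy₀f⟩ := Finset.card_pos.mp hpos
    have hy₀Y : y₀ ∈ Y := (Finset.mem_filter.mp hy₀f).1
    have hbad : ψ y₀ ≠ y₀ := (Finset.mem_filter.mp hy₀f).2
    by_cases hcA : ∀ y ∈ Y, y ≠ y₀ → ψ y ≠ y₀
    · -- Case A
      obtain ⟨c, hcC, hcfix, hcp⟩ := stepA he hs hinj hy₀Y hbad hcA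
      have hinj' : Set.InjOn (Function.update ψ y₀ y₀) ↑(Y) := injOn_update he hinj hcA
      have hcard' : ((Y).filter (fun y => Function.update ψ y₀ y₀ y ≠ y)).card ≤ k := by
        rw [filter_update_eq_erase, Finset.card_erase_of_mem hy₀f]
        omega
      obtain ⟨F', hF', hF'v⟩ := IH _ hinj' hcard'
      refine ⟨F' * c, mul_mem hF' (Subsemigroup.subset_closure hcC), ?_⟩
      intro y hy
      show F' (c (ψ y)) = y
      by_cases hyy : y = y₀
      · subst hyy
        rw [hcp]
        have h1 : Function.update ψ y y y = y := Function.update_self _ _ _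
        calc F' y = F' (Function.update ψ y y y) := by rw [h1]
        _ = y := hF'v y hy
      · rw [hcfix y hy hyy]
        have h1 : Function.update ψ y₀ y₀ y = ψ y := Function.update_of_ne hyy _ _
        rw [← h1]
        exact hF'v y hy
    · -- Case B
      push_neg at hcA
      obtain ⟨y₁, hy₁Y, hy₁ne, hψy₁⟩ := hcA
      have hne01 : y₀ ≠ y₁ := by intro h; subst h; exact hbad hψy₁
      obtain ⟨w, hw⟩ := exists_w hs
      have hwY : w ∉ Y := fun h => hw (fixY he h)
      have hYlt : (Y).card < n := by
        have hss : (Y) ⊂ Finset.univ := Finset.ssubset_univ_iff.mpr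
          (fun h => hwY (by rw [h]; exact Finset.mem_univ w))
        have := Finset.card_lt_card hss
        simpa using this
      have hzex : ∃ z, z ∉ (Y).image ψ := by
        by_contra hc
        push_neg at hc
        have h1 : (Finset.univ : Finset (Fin n)) ⊆ (Y).image ψ := fun z _ => hc z
        have h2 := Finset.card_le_card h1
        have h3 := Finset.card_image_le (f := ψ) (s := Y)
        simp only [Finset.card_univ, Fintype.card_fin] at h2
        omega
      obtain ⟨z, hz⟩ := hzex
      have hy₀im : y₀ ∈ (Y).image ψ := hψy₁ ▸ Finset.mem_image_of_mem ψ hy₁Y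
      set TB : Finset (Fin n) := insert z (((Y).erase y₁).image ψ) with hTB
      have hznim : z ∉ ((Y).erase y₁).image ψ := fun h =>
        hz (Finset.image_subset_image (Finset.erase_subset _ _) h)
      have hTBcard : TB.card = (Y).card := by
        rw [hTB, Finset.card_insert_of_notMem hznim,
          Finset.card_image_of_injOn (hinj.mono (Finset.coe_subset.mpr (Finset.erase_subset _ _))),
          Finset.card_erase_of_mem hy₁Y]
        have : 0 < (Y).card := Finset.card_pos.mpr ⟨y₁, hy₁Y⟩
        omega
      have hzTB : z ∈ TB := Finset.mem_insert_self _ _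
      have hy₀TB : y₀ ∉ TB := by
        intro h
        rcases Finset.mem_insert.mp h with h | h
        · exact hz (h ▸ hy₀im)
        · obtain ⟨x, hx, hψx⟩ := Finset.mem_image.mp h
          have hx1 : x = y₁ := hinj (Finset.mem_coe.mpr (Finset.mem_of_mem_erase hx))
            (Finset.mem_coe.mpr hy₁Y) (by rw [hψx, hψy₁])
          exact Finset.ne_of_mem_erase hx hx1
      obtain ⟨cB, hcBC, hcBfix, hcBp⟩ := sub he hs TB hTBcard hzTB hy₀TB
      have hvz : ∀ y ∈ Y, y ≠ y₁ → ψ y ≠ z := by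
        intro y hy _ h
        exact hz (h ▸ Finset.mem_image_of_mem ψ hy)
      have hinj'' : Set.InjOn (Function.update ψ y₁ z) ↑(Y) := injOn_update he hinj hvz
      have hψ''y₀ : Function.update ψ y₁ z y₀ = ψ y₀ := Function.update_of_ne hne01 _ _
      have hbad'' : Function.update ψ y₁ z y₀ ≠ y₀ := by rw [hψ''y₀]; exact hbad
      have hnotim'' : ∀ y ∈ Y, y ≠ y₀ → Function.update ψ y₁ z y ≠ y₀ := by
        intro y hy hne h
        by_cases hyy₁ : y = y₁
        · subst hyy₁
          rw [Function.update_self] at h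
          exact hz (h ▸ hy₀im)
        · rw [Function.update_of_ne hyy₁] at h
          exact hyy₁ (hinj (Finset.mem_coe.mpr hy) (Finset.mem_coe.mpr hy₁Y) (by rw [h, hψy₁]))
      obtain ⟨cA, hcAC, hcAfix, hcAp⟩ := stepA he hs hinj'' hy₀Y hbad'' hnotim''
      have hinj''' : Set.InjOn (Function.update (Function.update ψ y₁ z) y₀ y₀) ↑(Y) :=
        injOn_update he hinj'' hnotim''
      have hy₀f'' : y₀ ∈ (Y).filter (fun y => Function.update ψ y₁ z y ≠ y) :=
        Finset.mem_filter.mpr ⟨hy₀Y, hbad''⟩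
      have hsub'' : ((Y).filter (fun y => Function.update ψ y₁ z y ≠ y)) ⊆
          ((Y).filter (fun y => ψ y ≠ y)) := by
        intro t ht
        obtain ⟨htY, htne⟩ := Finset.mem_filter.mp ht
        refine Finset.mem_filter.mpr ⟨htY, ?_⟩
        by_cases hty₁ : t = y₁
        · subst hty₁; rw [hψy₁]; exact Ne.symm hy₁ne
        · rwa [Function.update_of_ne hty₁] at htne
      have hcard''' :
          ((Y).filter (fun y => Function.update (Function.update ψ y₁ z) y₀ y₀ y ≠ y)).card ≤ k := by
        rw [filter_update_eq_erase, Finset.card_erase_of_mem hy₀f'']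
        have := Finset.card_le_card hsub''
        omega
      obtain ⟨F, hF, hFv⟩ := IH _ hinj''' hcard'''
      refine ⟨F * cA * cB,
        mul_mem (mul_mem hF (Subsemigroup.subset_closure hcAC))
          (Subsemigroup.subset_closure hcBC), ?_⟩
      intro y hy
      show F (cA (cB (ψ y))) = y
      by_cases hyy₁ : y = y₁
      · subst hyy₁
        rw [hψy₁, hcBp]
        have hz'' : Function.update ψ y z y = z := Function.update_self _ _ _
        rw [← hz'', hcAfix y hy (Ne.symm hne01)]
        have h2 : Function.update (Function.update ψ y z) y₀ y₀ y = Function.update ψ y z y :=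
          Function.update_of_ne (Ne.symm hne01) _ _
        rw [← h2]
        exact hFv y hy
      · have hcB : cB (ψ y) = ψ y := hcBfix _ (Finset.mem_insert_of_mem
          (Finset.mem_image_of_mem ψ (Finset.mem_erase.mpr ⟨hyy₁, hy⟩)))
        rw [hcB]
        by_cases hyy₀ : y = y₀
        · subst hyy₀
          rw [← hψ''y₀, hcAp]
          have h1 : Function.update (Function.update ψ y₁ z) y y y = y :=
            Function.update_self _ _ _
          calc F y = F (Function.update (Function.update ψ y₁ z) y y y) := by rw [h1]
          _ = y := hFv y hy
        · have hψeq : Function.update ψ y₁ z y = ψ y := Function.update_of_ne hyy₁ _ _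
          rw [← hψeq, hcAfix y hy hyy₀]
          have h2 : Function.update (Function.update ψ y₁ z) y₀ y₀ y =
              Function.update ψ y₁ z y := Function.update_of_ne hyy₀ _ _
          rw [← h2]
          exact hFv y hy

lemma conjMem : ∀ F ∈ Subsemigroup.closure (conjClass e),
    ∀ g : Equiv.Perm (Fin n), ofPerm g⁻¹ * F * ofPerm g ∈ Subsemigroup.closure (conjClass e) := by
  intro F hF
  refine Subsemigroup.closure_induction
    (p := fun x _ => ∀ g : Equiv.Perm (Fin n),
      ofPerm g⁻¹ * x * ofPerm g ∈ Subsemigroup.closure (conjClass e)) ?_ ?_ hF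
  · rintro x ⟨h, rfl⟩ g
    refine Subsemigroup.subset_closure ⟨h * g, ?_⟩
    rw [mul_inv_rev, ofPerm_mul, ofPerm_mul]
    simp only [mul_assoc]
  · intro x y hx hy ihx ihy g
    have key : ofPerm g⁻¹ * (x * y) * ofPerm g
        = (ofPerm g⁻¹ * x * ofPerm g) * (ofPerm g⁻¹ * y * ofPerm g) := by
      funext a
      show g⁻¹ (x (y (g a))) = g⁻¹ (x (g (g⁻¹ (y (g a)))))
      rw [Equiv.Perm.inv_def, Equiv.apply_symm_apply]
    rw [key]
    exact mul_mem (ihx g) (ihy g)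

lemma lemL (he : e * e = e) (hs : ¬ Function.Bijective e) (g : Equiv.Perm (Fin n)) :
    e * ofPerm g ∈ Subsemigroup.closure (conjClass e) := by
  obtain ⟨F, hF, hFv⟩ := Mlem he hs (((Y).filter (fun y => (⇑g⁻¹ : Fin n → Fin n) y ≠ y)).card)
    (⇑g⁻¹) (g⁻¹.injective.injOn) le_rfl
  have key : e * ofPerm g = F * (ofPerm g⁻¹ * e * ofPerm g) := by
    funext x
    show e (g x) = F (g⁻¹ (e (g x)))
    exact (hFv (e (g x)) (mem_Y (g x))).symm
  rw [key]
  exact mul_mem hF (Subsemigroup.subset_closure ⟨g, rfl⟩)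

lemma mulPermMem (he : e * e = e) (hs : ¬ Function.Bijective e) :
    ∀ F ∈ Subsemigroup.closure (conjClass e),
    ∀ g : Equiv.Perm (Fin n), F * ofPerm g ∈ Subsemigroup.closure (conjClass e) := by
  intro F hF
  refine Subsemigroup.closure_induction
    (p := fun x _ => ∀ g : Equiv.Perm (Fin n),
      x * ofPerm g ∈ Subsemigroup.closure (conjClass e)) ?_ ?_ hF
  · rintro x ⟨h, rfl⟩ g
    have key : (ofPerm h⁻¹ * e * ofPerm h) * ofPerm g
        = ofPerm h⁻¹ * (e * ofPerm (h * g * h⁻¹)) * ofPerm h := by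
      funext a
      show h⁻¹ (e (h (g a))) = h⁻¹ (e (h (g (h⁻¹ (h a)))))
      rw [Equiv.Perm.inv_def, Equiv.symm_apply_apply]
    rw [key]
    exact conjMem _ (lemL he hs (h * g * h⁻¹)) h
  · intro x y hx hy ihx ihy g
    rw [mul_assoc]
    exact mul_mem hx (ihy g)

end Aux

open Aux

/-- For a singular idempotent `e`, `⟨C_e⟩ = e^{S_n} = ⟨{e} ∪ S_n⟩ \ S_n`. -/
theorem stmt10 (n : ℕ) (e : Tn n) (he : e * e = e) (hs : ¬ Function.Bijective e) :
    (↑(Subsemigroup.closure (conjClass e)) : Set (Tn n)) =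
      ↑(Subsemigroup.closure ({e} ∪ perms n)) \ perms n := by
  classical
  apply Set.eq_of_subset_of_subset
  · intro x hx
    have hx' : x ∈ Subsemigroup.closure (conjClass e) := hx
    refine ⟨?_, ?_⟩
    · have hsub : Subsemigroup.closure (conjClass e) ≤ Subsemigroup.closure ({e} ∪ perms n) := by
        rw [Subsemigroup.closure_le]
        rintro c ⟨g, rfl⟩
        exact mul_mem (mul_mem (Subsemigroup.subset_closure (Or.inr ⟨g⁻¹, rfl⟩))
          (Subsemigroup.subset_closure (Or.inl rfl)))
          (Subsemigroup.subset_closure (Or.inr ⟨g, rfl⟩))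
      exact hsub hx'
    · have hnsurj : ¬ Function.Surjective x := by
        refine Subsemigroup.closure_induction (M := Function.End (Fin n))
          (p := fun t _ => ¬ Function.Surjective (t : Function.End (Fin n))) ?_ ?_ hx'
        · rintro t ⟨g, rfl⟩ hsurj
          apply hs
          refine (Finite.surjective_iff_bijective (f := (e : Fin n → Fin n))).mp ?_
          intro b
          obtain ⟨a, ha⟩ := hsurj (g⁻¹ b)
          exact ⟨g a, g⁻¹.injective ha⟩
        · intro a b ha hb iha ihb hsurj
          exact iha (Function.Surjective.of_comp (g := (b : Function.End (Fin n))) hsurj)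
      rintro ⟨g, rfl⟩
      exact hnsurj g.surjective
  · rintro x ⟨hx, hnp⟩
    have hx' : x ∈ Subsemigroup.closure ({e} ∪ perms n) := hx
    let M : Subsemigroup (Tn n) :=
      { carrier := perms n ∪ {x | ∃ F ∈ Subsemigroup.closure (conjClass e),
          ∃ g : Equiv.Perm (Fin n), x = F * ofPerm g},
        mul_mem' := by
          rintro a b (⟨g, rfl⟩ | ⟨F, hF, g, rfl⟩) (⟨h, rfl⟩ | ⟨G, hG, h, rfl⟩)
          · exact Or.inl ⟨g * h, rfl⟩
          · refine Or.inr ⟨ofPerm g * G * ofPerm g⁻¹, ?_, g * h, ?_⟩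
            · have := conjMem G hG g⁻¹
              rwa [inv_inv] at this
            · funext a
              show g (G (h a)) = g (G (g⁻¹ (g (h a))))
              rw [Equiv.Perm.inv_def, Equiv.symm_apply_apply]
          · exact Or.inr ⟨F, hF, g * h, by rw [ofPerm_mul, mul_assoc]⟩
          · refine Or.inr ⟨F * (ofPerm g * G * ofPerm g⁻¹), ?_, g * h, ?_⟩
            · refine mul_mem hF ?_
              have := conjMem G hG g⁻¹
              rwa [inv_inv] at this
            · funext a
              show F (g (G (h a))) = F (g (G (g⁻¹ (g (h a)))))
              rw [Equiv.Perm.inv_def, Equiv.symm_apply_apply] }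
    have hgen : ({e} ∪ perms n : Set (Tn n)) ⊆ ↑M := by
      rintro t (rfl | ⟨g, rfl⟩)
      · exact Or.inr ⟨t, Subsemigroup.subset_closure
          ⟨1, by rw [inv_one, ofPerm_one, one_mul, mul_one]⟩, 1, by rw [ofPerm_one, mul_one]⟩
      · exact Or.inl ⟨g, rfl⟩
    have hxM : x ∈ M := Subsemigroup.closure_le.mpr hgen hx'
    rcases hxM with hp | ⟨F, hF, g, rfl⟩
    · exact absurd hp hnp
    · exact mulPermMem he hs F hF g
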